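/- Let (Ω, F, P) be a probability space, λ ∈ (0,1), and Z a bounded measurable random variable. Let q be a λ-quantile of −Z, i.e. q = −VaR_λ(−Z) where VaR_λ(−Z) = inf{m : P(Z > m) ≤ λ}. Then AVaR_λ(−Z) := sup{E_Q[Z] : Q ≪ P, dQ/dP ≤ 1/λ} satisfies AVaR_λ(−Z) = (1/λ) E[(Z − VaR_λ(−Z))⁺] + VaR_λ(−Z). -/

import Mathlib

open MeasureTheory Set
open scoped ENNReal NNReal

/-- A measurable a.e.-bounded function on a finite measure space is integrable. -/
lemma stmt8_integrable_of_bounded {Ω : Type*} [MeasurableSpace Ω] {μ : Measure Ω}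
    [IsFiniteMeasure μ] {f : Ω → ℝ} {C : ℝ} (hf : Measurable f) (h : ∀ᵐ ω ∂μ, |f ω| ≤ C) :
    Integrable f μ :=
  ⟨hf.aestronglyMeasurable, HasFiniteIntegral.of_bounded (h.mono fun ω hω => by simpa using hω)⟩

/-- The Rockafellar–Uryasev representation of Average Value at Risk. -/
theorem stmt8 {Ω : Type*} [MeasurableSpace Ω] (μ : Measure Ω) [IsProbabilityMeasure μ]
    (l : ℝ) (hl0 : 0 < l) (hl1 : l < 1)
    (Z : Ω → ℝ) (hZ : Measurable Z) (hZb : ∃ C, ∀ ω, |Z ω| ≤ C)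
    (v : ℝ) (hv : v = sInf {m : ℝ | μ {ω | m < Z ω} ≤ ENNReal.ofReal l}) :
    sSup {r : ℝ | ∃ Q : Measure Ω, IsProbabilityMeasure Q ∧ Q ≪ μ ∧
        (∀ᵐ ω ∂μ, Q.rnDeriv μ ω ≤ ENNReal.ofReal (1 / l)) ∧ r = ∫ ω, Z ω ∂Q}
      = (1 / l) * (∫ ω, max (Z ω - v) 0 ∂μ) + v := by
  obtain ⟨C, hC⟩ := hZb
  rcases isEmpty_or_nonempty Ω with hΩ | hΩ
  · exfalso
    have h1 : (1 : ℝ≥0∞) = 0 := by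
      simpa [Set.univ_eq_empty_iff.mpr hΩ] using (measure_univ (μ := μ)).symm
    simp at h1
  have hC0 : 0 ≤ C := le_trans (abs_nonneg _) (hC (Classical.arbitrary Ω))
  set lE : ℝ≥0∞ := ENNReal.ofReal l with hlE
  set S : Set ℝ := {m : ℝ | μ {ω | m < Z ω} ≤ lE} with hS
  -- S is upward closed
  have hS_up : ∀ m ∈ S, ∀ m', m ≤ m' → m' ∈ S := by
    intro m hm m' hmm'
    exact le_trans (measure_mono (fun ω hω => lt_of_le_of_lt hmm' hω)) hm
  have hSC : C ∈ S := by
    have : {ω | C < Z ω} = (∅ : Set Ω) := by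
      ext ω
      simp only [Set.mem_setOf_eq, Set.mem_empty_iff_false, iff_false, not_lt]
      exact le_trans (le_abs_self _) (hC ω)
    simp [hS, this]
  have hSbdd : BddBelow S := by
    refine ⟨-C, fun m hm => ?_⟩
    by_contra h
    push_neg at h
    have huniv : {ω | m < Z ω} = Set.univ := by
      ext ω
      simp only [Set.mem_setOf_eq, Set.mem_univ, iff_true]
      exact lt_of_lt_of_le h (neg_le_of_abs_le (hC ω))
    have : (1 : ℝ≥0∞) ≤ lE := by
      have := hm
      rw [hS, Set.mem_setOf_eq, huniv, measure_univ] at this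
      exact this
    have : (1 : ℝ≥0∞) < 1 := lt_of_le_of_lt this (by
      simpa [hlE] using ENNReal.ofReal_lt_one.mpr hl1)
    exact lt_irrefl _ this
  have hSne : S.Nonempty := ⟨C, hSC⟩
  have hvS : ∀ m, v < m → m ∈ S := by
    intro m hm
    rw [hv] at hm
    obtain ⟨m', hm'S, hm'⟩ := exists_lt_of_csInf_lt hSne hm
    exact hS_up m' hm'S m hm'.le
  have hvnotS : ∀ m, m < v → lE < μ {ω | m < Z ω} := by
    intro m hm
    by_contra h
    push_neg at h
    have : v ≤ m := hv ▸ csInf_le hSbdd h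
    exact absurd hm (not_lt.mpr this)
  -- the two quantile inequalities
  have ha : μ {ω | v < Z ω} ≤ lE := by
    have hmono : Monotone (fun n : ℕ => {ω | v + 1 / (n + 1) < Z ω}) := by
      intro n m hnm ω hω
      simp only [Set.mem_setOf_eq] at hω ⊢
      have h1 : (1:ℝ) / (m + 1) ≤ 1 / (n + 1) := by
        gcongr
      linarith
    have hunion : {ω | v < Z ω} = ⋃ n : ℕ, {ω | v + 1 / (n + 1) < Z ω} := by
      ext ω
      simp only [Set.mem_setOf_eq, Set.mem_iUnion]
      constructor
      · intro hω
        obtain ⟨n, hn⟩ := exists_nat_one_div_lt (sub_pos.mpr hω)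
        exact ⟨n, by linarith⟩
      · rintro ⟨n, hn⟩
        have : (0:ℝ) < 1 / (n + 1) := by positivity
        linarith
    rw [hunion, hmono.measure_iUnion]
    refine iSup_le fun n => hvS _ (by
      have : (0:ℝ) < 1 / ((n:ℝ) + 1) := by positivity
      linarith)
  have hb : lE ≤ μ {ω | v ≤ Z ω} := by
    have hanti : Antitone (fun n : ℕ => {ω | v - 1 / (n + 1) < Z ω}) := by
      intro n m hnm ω hω
      simp only [Set.mem_setOf_eq] at hω ⊢
      have h1 : (1:ℝ) / (m + 1) ≤ 1 / (n + 1) := by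
        gcongr
      linarith
    have hinter : {ω | v ≤ Z ω} = ⋂ n : ℕ, {ω | v - 1 / (n + 1) < Z ω} := by
      ext ω
      simp only [Set.mem_setOf_eq, Set.mem_iInter]
      constructor
      · intro hω n
        have : (0:ℝ) < 1 / (n + 1) := by positivity
        linarith
      · intro h
        by_contra hlt
        push_neg at hlt
        obtain ⟨n, hn⟩ := exists_nat_one_div_lt (sub_pos.mpr hlt)
        have := h n
        linarith
    rw [hinter, Directed.measure_iInter
      (fun n => (measurableSet_lt measurable_const hZ).nullMeasurableSet)
      (hanti.directed_ge) ⟨0, measure_ne_top _ _⟩]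
    exact le_iInf fun n => (hvnotS _ (by
      have : (0:ℝ) < 1 / ((n:ℝ) + 1) := by positivity
      linarith)).le
  -- sets A and B
  set A : Set Ω := {ω | v < Z ω} with hA_def
  set B : Set Ω := {ω | Z ω = v} with hB_def
  have hA : MeasurableSet A := measurableSet_lt measurable_const hZ
  have hB : MeasurableSet B := hZ (measurableSet_singleton v)
  have hABdisj : Disjoint A B := by
    rw [Set.disjoint_left]
    intro ω hωA hωB
    exact absurd hωB (ne_of_gt hωA)
  have hABunion : A ∪ B = {ω | v ≤ Z ω} := by
    ext ω
    simp only [Set.mem_union, hA_def, hB_def, Set.mem_setOf_eq]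
    constructor
    · rintro (h | h)
      · exact h.le
      · exact h.ge
    · intro h
      rcases lt_or_eq_of_le h with h' | h'
      · exact Or.inl h'
      · exact Or.inr h'.symm
  set a : ℝ := (μ A).toReal with ha_def
  set b : ℝ := (μ B).toReal with hb_def
  have ha_nonneg : 0 ≤ a := ENNReal.toReal_nonneg
  have hb_nonneg : 0 ≤ b := ENNReal.toReal_nonneg
  have haR : a ≤ l := by
    have := ENNReal.toReal_mono (by simp [hlE]) ha
    rwa [ENNReal.toReal_ofReal hl0.le] at this
  have hbR : l ≤ a + b := by
    have hsum : μ A + μ B = μ {ω | v ≤ Z ω} := by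
      rw [← hABunion, measure_union hABdisj hB]
    have h1 : lE ≤ μ A + μ B := hsum ▸ hb
    have := ENNReal.toReal_mono (by
      exact ENNReal.add_ne_top.mpr ⟨measure_ne_top _ _, measure_ne_top _ _⟩) h1
    rwa [ENNReal.toReal_ofReal hl0.le, ENNReal.toReal_add (measure_ne_top _ _)
      (measure_ne_top _ _)] at this
  -- the optimal density
  set r₂ : ℝ := if b = 0 then 0 else (l - a) / (l * b) with hr₂_def
  have hr₂0 : 0 ≤ r₂ := by
    rw [hr₂_def]
    split_ifs with h
    · exact le_rfl
    · have hbpos : 0 < b := lt_of_le_of_ne hb_nonneg (Ne.symm h)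
      exact div_nonneg (by linarith) (by positivity)
  have hr₂le : r₂ ≤ 1 / l := by
    rw [hr₂_def]
    split_ifs with h
    · positivity
    · have hbpos : 0 < b := lt_of_le_of_ne hb_nonneg (Ne.symm h)
      rw [div_le_div_iff₀ (by positivity) hl0]
      nlinarith
  have hsum1 : (1 / l) * a + r₂ * b = 1 := by
    rw [hr₂_def]
    split_ifs with h
    · have hal : a = l := le_antisymm haR (by linarith [hbR, h])
      rw [h, hal]
      field_simp
      norm_num
    · have hbpos : 0 < b := lt_of_le_of_ne hb_nonneg (Ne.symm h)
      field_simp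
      ring
  -- the density function
  set g : Ω → ℝ := fun ω => A.indicator (fun _ => 1 / l) ω + B.indicator (fun _ => r₂) ω
    with hg_def
  have hg_meas : Measurable g :=
    (measurable_const.indicator hA).add (measurable_const.indicator hB)
  have hg0 : ∀ ω, 0 ≤ g ω := fun ω => add_nonneg
    (Set.indicator_nonneg (fun _ _ => by positivity) ω)
    (Set.indicator_nonneg (fun _ _ => hr₂0) ω)
  have hgA : ∀ ω ∈ A, g ω = 1 / l := by
    intro ω hω
    have hωB : ω ∉ B := fun hB' => absurd hB' (Set.disjoint_left.mp hABdisj hω)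
    simp [hg_def, Set.indicator_of_mem hω, Set.indicator_of_notMem hωB]
  have hgB : ∀ ω ∈ B, g ω = r₂ := by
    intro ω hω
    have hωA : ω ∉ A := fun hA' => absurd hω (Set.disjoint_left.mp hABdisj hA')
    simp [hg_def, Set.indicator_of_mem hω, Set.indicator_of_notMem hωA]
  have hgO : ∀ ω, ω ∉ A → ω ∉ B → g ω = 0 := by
    intro ω hωA hωB
    simp [hg_def, Set.indicator_of_notMem hωA, Set.indicator_of_notMem hωB]
  have hg_le : ∀ ω, g ω ≤ 1 / l := by
    intro ω
    by_cases hωA : ω ∈ A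
    · rw [hgA ω hωA]
    · by_cases hωB : ω ∈ B
      · rw [hgB ω hωB]; exact hr₂le
      · rw [hgO ω hωA hωB]; positivity
  -- the optimal measure
  set Q₀ : Measure Ω := μ.withDensity (fun ω => ENNReal.ofReal (g ω)) with hQ₀_def
  have hgE_meas : Measurable (fun ω => ENNReal.ofReal (g ω)) :=
    hg_meas.ennreal_ofReal
  have hgE_eq : (fun ω => ENNReal.ofReal (g ω)) = fun ω =>
      A.indicator (fun _ => ENNReal.ofReal (1 / l)) ω
        + B.indicator (fun _ => ENNReal.ofReal r₂) ω := by
    funext ω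
    by_cases hωA : ω ∈ A
    · have hωB : ω ∉ B := fun hB' => absurd hB' (Set.disjoint_left.mp hABdisj hωA)
      simp [hgA ω hωA, Set.indicator_of_mem hωA, Set.indicator_of_notMem hωB]
    · by_cases hωB : ω ∈ B
      · simp [hgB ω hωB, Set.indicator_of_mem hωB, Set.indicator_of_notMem hωA]
      · simp [hgO ω hωA hωB, Set.indicator_of_notMem hωA, Set.indicator_of_notMem hωB]
  have hlintegral : ∫⁻ ω, ENNReal.ofReal (g ω) ∂μ = 1 := by
    rw [hgE_eq, lintegral_add_left (measurable_const.indicator hA),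
      lintegral_indicator_const hA, lintegral_indicator_const hB]
    have hμA : μ A = ENNReal.ofReal a := (ENNReal.ofReal_toReal (measure_ne_top _ _)).symm
    have hμB : μ B = ENNReal.ofReal b := (ENNReal.ofReal_toReal (measure_ne_top _ _)).symm
    rw [hμA, hμB, ← ENNReal.ofReal_mul (by positivity), ← ENNReal.ofReal_mul hr₂0,
      ← ENNReal.ofReal_add (by positivity) (by positivity), hsum1, ENNReal.ofReal_one]
  have hQ₀prob : IsProbabilityMeasure Q₀ := by
    constructor
    rw [hQ₀_def, withDensity_apply _ MeasurableSet.univ, Measure.restrict_univ]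
    exact hlintegral
  have hQ₀ac : Q₀ ≪ μ := withDensity_absolutelyContinuous μ _
  have hQ₀rn : ∀ᵐ ω ∂μ, Q₀.rnDeriv μ ω ≤ ENNReal.ofReal (1 / l) := by
    filter_upwards [Measure.rnDeriv_withDensity μ hgE_meas] with ω hω
    rw [hω]
    exact ENNReal.ofReal_le_ofReal (hg_le ω)
  -- integrability facts
  have hmax_int : Integrable (fun ω => max (Z ω - v) 0) μ := by
    refine stmt8_integrable_of_bounded (C := C + |v|) ((hZ.sub measurable_const).max measurable_const) ?_
    filter_upwards with ω
    rw [abs_of_nonneg (le_max_right _ _)]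
    have h1 : Z ω - v ≤ C + |v| := by
      have := hC ω
      have := abs_le.mp (hC ω)
      have := le_abs_self v
      have := neg_abs_le v
      linarith
    have h2 : (0:ℝ) ≤ C + |v| := by positivity
    exact max_le h1 h2
  have hg_int : Integrable g μ := by
    refine stmt8_integrable_of_bounded (C := 1 / l) hg_meas ?_
    filter_upwards with ω
    rw [abs_of_nonneg (hg0 ω)]
    exact hg_le ω
  -- integral of g is 1
  have hg_integral : ∫ ω, g ω ∂μ = 1 := by
    rw [hg_def]
    rw [integral_add ((integrable_indicator_iff hA).mpr (integrableOn_const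
      (measure_ne_top _ _))) ((integrable_indicator_iff hB).mpr (integrableOn_const
      (measure_ne_top _ _)))]
    rw [integral_indicator_const _ hA, integral_indicator_const _ hB]
    simp only [smul_eq_mul]
    rw [measureReal_def, measureReal_def, ← ha_def, ← hb_def]
    linarith [hsum1]
  -- the key pointwise identity
  have hg_key : ∀ ω, g ω * Z ω = (1 / l) * max (Z ω - v) 0 + v * g ω := by
    intro ω
    by_cases hωA : ω ∈ A
    · have hZω : v < Z ω := hωA
      rw [hgA ω hωA, max_eq_left (by linarith)]
      ring
    · by_cases hωB : ω ∈ B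
      · have hZω : Z ω = v := hωB
        rw [hgB ω hωB, hZω, max_eq_right (by linarith)]
        ring
      · have hZω : Z ω < v := by
          rcases lt_trichotomy (Z ω) v with h | h | h
          · exact h
          · exact absurd h hωB
          · exact absurd h hωA
        rw [hgO ω hωA hωB, max_eq_right (by linarith)]
        ring
  -- integral of Z with respect to Q₀
  have hQ₀int : ∫ ω, Z ω ∂Q₀ = (1 / l) * (∫ ω, max (Z ω - v) 0 ∂μ) + v := by
    have hφ : Measurable (fun ω => (g ω).toNNReal) := hg_meas.real_toNNReal
    have hQ₀eq : Q₀ = μ.withDensity (fun ω => ((g ω).toNNReal : ℝ≥0∞)) := by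
      rw [hQ₀_def]; rfl
    rw [hQ₀eq, integral_withDensity_eq_integral_smul hφ]
    have heq : ∀ ω, (g ω).toNNReal • Z ω = g ω * Z ω := by
      intro ω
      rw [NNReal.smul_def, smul_eq_mul, Real.coe_toNNReal _ (hg0 ω)]
    simp_rw [heq, hg_key]
    rw [integral_add (hmax_int.const_mul _) (hg_int.const_mul _),
      integral_const_mul, integral_const_mul, hg_integral, mul_one]
  -- upper bound for any admissible Q
  have hupper : ∀ r ∈ {r : ℝ | ∃ Q : Measure Ω, IsProbabilityMeasure Q ∧ Q ≪ μ ∧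
      (∀ᵐ ω ∂μ, Q.rnDeriv μ ω ≤ ENNReal.ofReal (1 / l)) ∧ r = ∫ ω, Z ω ∂Q},
      r ≤ (1 / l) * (∫ ω, max (Z ω - v) 0 ∂μ) + v := by
    rintro r ⟨Q, hQp, hQac, hQbd, hr⟩
    haveI := hQp
    set gq : Ω → ℝ := fun ω => (Q.rnDeriv μ ω).toReal with hgq_def
    have hgq_meas : Measurable gq := (Measure.measurable_rnDeriv Q μ).ennreal_toReal
    have hgq0 : ∀ ω, 0 ≤ gq ω := fun ω => ENNReal.toReal_nonneg
    have hgq_le : ∀ᵐ ω ∂μ, gq ω ≤ 1 / l := by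
      filter_upwards [hQbd] with ω hω
      exact ENNReal.toReal_le_of_le_ofReal (by positivity) hω
    have hgq_int_one : ∫ ω, gq ω ∂μ = 1 := by
      rw [hgq_def]
      rw [Measure.integral_toReal_rnDeriv hQac, measureReal_def, measure_univ, ENNReal.toReal_one]
    have hgq_int : Integrable gq μ := by
      refine stmt8_integrable_of_bounded (C := 1 / l) hgq_meas ?_
      filter_upwards [hgq_le] with ω hω
      rw [abs_of_nonneg (hgq0 ω)]
      exact hω
    have hr' : r = ∫ ω, gq ω * Z ω ∂μ := by
      rw [hr, ← MeasureTheory.integral_rnDeriv_smul hQac]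
      simp_rw [smul_eq_mul]
      rfl
    have hgqZ_int : Integrable (fun ω => gq ω * (Z ω - v)) μ := by
      refine stmt8_integrable_of_bounded (C := (1 / l) * (C + |v|)) (hgq_meas.mul (hZ.sub measurable_const)) ?_
      filter_upwards [hgq_le] with ω hω
      rw [abs_mul, abs_of_nonneg (hgq0 ω)]
      have h1 : |Z ω - v| ≤ C + |v| := by
        obtain ⟨h2, h3⟩ := abs_le.mp (hC ω)
        have h4 := le_abs_self v
        have h5 := neg_abs_le v
        rw [abs_sub_le_iff]
        constructor <;> linarith
      exact mul_le_mul hω h1 (abs_nonneg _) (by positivity)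
    have hsplit : ∀ ω, gq ω * Z ω = gq ω * (Z ω - v) + v * gq ω := by
      intro ω; ring
    have hmono : ∫ ω, gq ω * (Z ω - v) ∂μ ≤ ∫ ω, (1 / l) * max (Z ω - v) 0 ∂μ := by
      apply integral_mono_ae hgqZ_int (hmax_int.const_mul _)
      filter_upwards [hgq_le] with ω hω
      calc gq ω * (Z ω - v) ≤ gq ω * max (Z ω - v) 0 :=
            mul_le_mul_of_nonneg_left (le_max_left _ _) (hgq0 ω)
        _ ≤ (1 / l) * max (Z ω - v) 0 :=
            mul_le_mul_of_nonneg_right hω (le_max_right _ _)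
    calc r = ∫ ω, gq ω * Z ω ∂μ := hr'
      _ = ∫ ω, (gq ω * (Z ω - v) + v * gq ω) ∂μ := by simp_rw [hsplit]
      _ = (∫ ω, gq ω * (Z ω - v) ∂μ) + ∫ ω, v * gq ω ∂μ :=
            integral_add hgqZ_int (hgq_int.const_mul _)
      _ ≤ (∫ ω, (1 / l) * max (Z ω - v) 0 ∂μ) + ∫ ω, v * gq ω ∂μ := by
            exact add_le_add_left hmono _
      _ = (1 / l) * (∫ ω, max (Z ω - v) 0 ∂μ) + v := by
            rw [integral_const_mul, integral_const_mul, hgq_int_one, mul_one]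
  -- conclude
  have hmem : (1 / l) * (∫ ω, max (Z ω - v) 0 ∂μ) + v ∈
      {r : ℝ | ∃ Q : Measure Ω, IsProbabilityMeasure Q ∧ Q ≪ μ ∧
        (∀ᵐ ω ∂μ, Q.rnDeriv μ ω ≤ ENNReal.ofReal (1 / l)) ∧ r = ∫ ω, Z ω ∂Q} :=
    ⟨Q₀, hQ₀prob, hQ₀ac, hQ₀rn, hQ₀int.symm⟩
  exact IsGreatest.csSup_eq ⟨hmem, hupper⟩
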